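/- For probability measures μ, ν on R with finite first moments, the infimum in the definition of W_1(μ,ν) is attained: the monotone coupling π_↑, defined as the law of (Q_μ(U), Q_ν(U)) with U uniform on (0,1), is an optimal coupling for the cost |x − y|. -/

import Mathlib

open MeasureTheory Set

/-- Generalized quantile (inverse CDF): `Q_F(u) = inf {x | F x ≥ u}`. -/
noncomputable def quantile (F : ℝ → ℝ) (u : ℝ) : ℝ := sInf {x | u ≤ F x}

/-- CDF of a real random variable `X` under `P`. -/
noncomputable def cdfRV {Ω : Type*} [MeasurableSpace Ω] (P : Measure Ω) (X : Ω → ℝ) (x : ℝ) : ℝ :=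
  (P {ω | X ω ≤ x}).toReal

/-- CDF of a measure on ℝ. -/
noncomputable def cdfOf (μ : Measure ℝ) (x : ℝ) : ℝ := (μ (Iic x)).toReal

/-- Uniform distribution on (0,1). -/
noncomputable def unif : Measure ℝ := volume.restrict (Ioo 0 1)

/-- 1-Wasserstein distance on ℝ: infimum over couplings of the expected distance. -/
noncomputable def W1 (μ ν : Measure ℝ) : ENNReal :=
  ⨅ π ∈ {π : Measure (ℝ × ℝ) | π.map Prod.fst = μ ∧ π.map Prod.snd = ν},
    ∫⁻ p, ENNReal.ofReal |p.1 - p.2| ∂π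

open Filter Topology

lemma cdfOf_eq (μ : Measure ℝ) [IsProbabilityMeasure μ] :
    cdfOf μ = ProbabilityTheory.cdf μ := by
  funext x; rw [cdfOf, ProbabilityTheory.cdf_eq_real]; rfl

lemma cdfOf_nonneg (μ : Measure ℝ) (t : ℝ) : 0 ≤ cdfOf μ t := ENNReal.toReal_nonneg

lemma cdfOf_le_one (μ : Measure ℝ) [IsProbabilityMeasure μ] (t : ℝ) : cdfOf μ t ≤ 1 := by
  rw [cdfOf_eq]; exact ProbabilityTheory.cdf_le_one μ t

lemma cdfOf_mono (μ : Measure ℝ) [IsProbabilityMeasure μ] : Monotone (cdfOf μ) := by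
  rw [cdfOf_eq]; exact ProbabilityTheory.monotone_cdf μ

lemma quantile_le_iff (μ : Measure ℝ) [IsProbabilityMeasure μ] {u t : ℝ}
    (h0 : 0 < u) (h1 : u < 1) :
    quantile (cdfOf μ) u ≤ t ↔ u ≤ cdfOf μ t := by
  rw [cdfOf_eq] at *
  set F := ProbabilityTheory.cdf μ with hF
  have hmono : Monotone F := ProbabilityTheory.monotone_cdf μ
  have hne : {x | u ≤ F x}.Nonempty := by
    obtain ⟨x, hx⟩ := ((ProbabilityTheory.tendsto_cdf_atTop μ).eventually
      (eventually_gt_nhds h1)).exists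
    exact ⟨x, hx.le⟩
  obtain ⟨x0, hx0⟩ := ((ProbabilityTheory.tendsto_cdf_atBot μ).eventually
      (eventually_lt_nhds h0)).exists
  have hbdd : BddBelow {x | u ≤ F x} := by
    refine ⟨x0, fun y hy => ?_⟩
    by_contra h
    exact absurd (hy.trans (hmono (le_of_not_ge h))) (not_le.2 hx0)
  constructor
  · intro h
    have hrc : ContinuousWithinAt F (Ioi t) t :=
      ((ProbabilityTheory.cdf μ).right_continuous t).mono Ioi_subset_Ici_self
    refine ge_of_tendsto hrc ?_
    filter_upwards [self_mem_nhdsWithin] with s hs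
    obtain ⟨y, hy, hys⟩ := exists_lt_of_csInf_lt hne (lt_of_le_of_lt h hs)
    exact hy.trans (hmono hys.le)
  · intro h
    exact csInf_le hbdd h

instance : IsProbabilityMeasure unif :=
  ⟨by simp [unif, Real.volume_Ioo]⟩

lemma ae_unif : ∀ᵐ u ∂unif, u ∈ Ioo (0:ℝ) 1 := ae_restrict_mem measurableSet_Ioo

lemma volume_between {a b : ℝ} (s : Set ℝ) (h1 : Ioo a b ⊆ s) (h2 : s ⊆ Ioc a b) :
    volume s = ENNReal.ofReal (b - a) := by
  refine le_antisymm ((measure_mono h2).trans_eq (by rw [Real.volume_Ioc])) ?_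
  calc ENNReal.ofReal (b - a) = volume (Ioo a b) := (Real.volume_Ioo).symm
    _ ≤ volume s := measure_mono h1

lemma aemeasurable_quantile (μ : Measure ℝ) [IsProbabilityMeasure μ] :
    AEMeasurable (quantile (cdfOf μ)) unif := by
  refine ⟨fun u => if u ∈ Ioo (0:ℝ) 1 then quantile (cdfOf μ) u else 0, ?_, ?_⟩
  · refine measurable_of_Iic fun c => ?_
    have : (fun u => if u ∈ Ioo (0:ℝ) 1 then quantile (cdfOf μ) u else 0) ⁻¹' Iic c =
        (Ioo 0 1 ∩ Iic (cdfOf μ c)) ∪ ((Ioo 0 1)ᶜ ∩ {_u : ℝ | (0:ℝ) ≤ c}) := by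
      ext u
      by_cases hu : u ∈ Ioo (0:ℝ) 1
      · simp only [mem_preimage, mem_Iic, if_pos hu, mem_union, mem_inter_iff, hu, true_and,
          mem_compl_iff, not_true, false_and, or_false, mem_setOf_eq]
        exact quantile_le_iff μ hu.1 hu.2
      · simp only [mem_Ioo] at hu
        simp [hu, mem_preimage, if_neg hu]
    rw [this]
    exact ((measurableSet_Ioo.inter measurableSet_Iic).union
      (measurableSet_Ioo.compl.inter (MeasurableSet.const _)))
  · filter_upwards [ae_unif] with u hu
    simp [hu]

lemma map_quantile (μ : Measure ℝ) [IsProbabilityMeasure μ] :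
    unif.map (quantile (cdfOf μ)) = μ := by
  have hq := aemeasurable_quantile μ
  have : IsProbabilityMeasure (unif.map (quantile (cdfOf μ))) :=
    Measure.isProbabilityMeasure_map hq
  refine Measure.ext_of_Iic _ _ fun t => ?_
  rw [Measure.map_apply_of_aemeasurable hq measurableSet_Iic]
  rw [unif, Measure.restrict_apply' measurableSet_Ioo]
  have heq : volume (quantile (cdfOf μ) ⁻¹' Iic t ∩ Ioo 0 1) =
      ENNReal.ofReal (cdfOf μ t - 0) := by
    refine volume_between _ ?_ ?_
    · intro u hu
      have hu1 : u ∈ Ioo (0:ℝ) 1 := ⟨hu.1, lt_of_lt_of_le hu.2 (cdfOf_le_one μ t)⟩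
      exact ⟨(quantile_le_iff μ hu1.1 hu1.2).2 hu.2.le, hu1⟩
    · rintro u ⟨hu, hu2⟩
      exact ⟨hu2.1, (quantile_le_iff μ hu2.1 hu2.2).1 hu⟩
  rw [heq, sub_zero, cdfOf, ENNReal.ofReal_toReal (measure_ne_top μ _)]

/-- The "discrepancy at level t" set. -/
def Dset (t : ℝ) : Set (ℝ × ℝ) :=
  {p | (p.1 ≤ t ∧ t < p.2) ∨ (p.2 ≤ t ∧ t < p.1)}

lemma measurableSet_Dset (t : ℝ) : MeasurableSet (Dset t) :=
  (((measurableSet_le measurable_fst measurable_const)).inter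
      (measurableSet_lt measurable_const measurable_snd)).union
    (((measurableSet_le measurable_snd measurable_const)).inter
      (measurableSet_lt measurable_const measurable_fst))

def Sset : Set ((ℝ × ℝ) × ℝ) :=
  {q | (q.1.1 ≤ q.2 ∧ q.2 < q.1.2) ∨ (q.1.2 ≤ q.2 ∧ q.2 < q.1.1)}

lemma measurableSet_Sset : MeasurableSet Sset :=
  (((measurableSet_le measurable_fst.fst measurable_snd)).inter
      (measurableSet_lt measurable_snd measurable_fst.snd)).union
    (((measurableSet_le measurable_fst.snd measurable_snd)).inter
      (measurableSet_lt measurable_snd measurable_fst.fst))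

lemma Sset_section_meas (p : ℝ × ℝ) :
    MeasurableSet {t : ℝ | (p, t) ∈ Sset} := by
  have : {t : ℝ | (p, t) ∈ Sset} = (Ici p.1 ∩ Iio p.2) ∪ (Ici p.2 ∩ Iio p.1) := by
    ext t; simp [Sset, Dset, and_comm]
  rw [this]
  exact ((measurableSet_Ici.inter measurableSet_Iio).union
    (measurableSet_Ici.inter measurableSet_Iio))

lemma volume_Sset_section (p : ℝ × ℝ) :
    volume {t : ℝ | (p, t) ∈ Sset} = ENNReal.ofReal |p.1 - p.2| := by
  obtain ⟨x, y⟩ := p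
  rcases le_total x y with h | h
  · have : {t : ℝ | ((x, y), t) ∈ Sset} = Ico x y := by
      ext t
      simp only [Sset, mem_setOf_eq, mem_Ico]
      constructor
      · rintro (ht | ht)
        · exact ht
        · exact absurd ((h.trans ht.1).trans_lt ht.2) (lt_irrefl x)
      · exact fun ht => Or.inl ht
    rw [this, Real.volume_Ico, abs_sub_comm, abs_of_nonneg (sub_nonneg.2 h)]
  · have : {t : ℝ | ((x, y), t) ∈ Sset} = Ico y x := by
      ext t
      simp only [Sset, mem_setOf_eq, mem_Ico]
      constructor
      · rintro (ht | ht)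
        · exact absurd ((h.trans ht.1).trans_lt ht.2) (lt_irrefl y)
        · exact ht
      · exact fun ht => Or.inr ht
    rw [this, Real.volume_Ico, abs_of_nonneg (sub_nonneg.2 h)]

lemma cost_eq_lintegral_Dset (π : Measure (ℝ × ℝ)) [SFinite π] :
    ∫⁻ p, ENNReal.ofReal |p.1 - p.2| ∂π = ∫⁻ t, π (Dset t) := by
  have key : ∫⁻ p, ∫⁻ t, Sset.indicator 1 (p, t) ∂volume ∂π
      = ∫⁻ t, ∫⁻ p, Sset.indicator 1 (p, t) ∂π ∂volume :=
    lintegral_lintegral_swap ((measurable_one.indicator measurableSet_Sset).aemeasurable)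
  calc ∫⁻ p, ENNReal.ofReal |p.1 - p.2| ∂π
      = ∫⁻ p, ∫⁻ t, Sset.indicator 1 (p, t) ∂volume ∂π := by
        refine lintegral_congr fun p => ?_
        have h1 : ∀ t : ℝ, Sset.indicator (1 : (ℝ × ℝ) × ℝ → ENNReal) (p, t)
            = ({t : ℝ | (p, t) ∈ Sset}).indicator 1 t := by
          intro t
          rfl
        rw [show (fun t => Sset.indicator (1 : (ℝ × ℝ) × ℝ → ENNReal) (p, t))
            = fun t => ({t : ℝ | (p, t) ∈ Sset}).indicator 1 t from funext h1,
          lintegral_indicator_one (Sset_section_meas p), volume_Sset_section p]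
    _ = ∫⁻ t, ∫⁻ p, Sset.indicator 1 (p, t) ∂π ∂volume := key
    _ = ∫⁻ t, π (Dset t) := by
        refine lintegral_congr fun t => ?_
        have h1 : ∀ p : ℝ × ℝ, Sset.indicator (1 : (ℝ × ℝ) × ℝ → ENNReal) (p, t)
            = (Dset t).indicator 1 p := by
          intro p
          rfl
        rw [show (fun p => Sset.indicator (1 : (ℝ × ℝ) × ℝ → ENNReal) (p, t))
            = fun p => (Dset t).indicator 1 p from funext h1,
          lintegral_indicator_one (measurableSet_Dset t)]

lemma abs_toReal_sub_le {a b : ENNReal} (ha : a ≠ ⊤) (hb : b ≠ ⊤) {c : ENNReal}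
    (h1 : a - b ≤ c) (h2 : b - a ≤ c) :
    ENNReal.ofReal |a.toReal - b.toReal| ≤ c := by
  rcases le_total b a with h | h
  · rw [abs_of_nonneg (sub_nonneg.2 ((ENNReal.toReal_le_toReal hb ha).2 h)),
      ← ENNReal.toReal_sub_of_le h ha, ENNReal.ofReal_toReal (ENNReal.sub_ne_top ha)]
    exact h1
  · rw [abs_of_nonpos (sub_nonpos.2 ((ENNReal.toReal_le_toReal ha hb).2 h)), neg_sub,
      ← ENNReal.toReal_sub_of_le h hb, ENNReal.ofReal_toReal (ENNReal.sub_ne_top hb)]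
    exact h2

lemma coupling_lower (μ ν : Measure ℝ) [IsProbabilityMeasure μ] [IsProbabilityMeasure ν]
    (π : Measure (ℝ × ℝ)) (h1 : π.map Prod.fst = μ) (h2 : π.map Prod.snd = ν) (t : ℝ) :
    ENNReal.ofReal |cdfOf μ t - cdfOf ν t| ≤ π (Dset t) := by
  have hA : π {p : ℝ × ℝ | p.1 ≤ t} = μ (Iic t) := by
    rw [← h1, Measure.map_apply measurable_fst measurableSet_Iic]; rfl
  have hB : π {p : ℝ × ℝ | p.2 ≤ t} = ν (Iic t) := by
    rw [← h2, Measure.map_apply measurable_snd measurableSet_Iic]; rfl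
  have hAB : {p : ℝ × ℝ | p.1 ≤ t} \ {p : ℝ × ℝ | p.2 ≤ t} ⊆ Dset t := by
    rintro p ⟨hp1, hp2⟩; exact Or.inl ⟨hp1, not_le.1 hp2⟩
  have hBA : {p : ℝ × ℝ | p.2 ≤ t} \ {p : ℝ × ℝ | p.1 ≤ t} ⊆ Dset t := by
    rintro p ⟨hp1, hp2⟩; exact Or.inr ⟨hp1, not_le.1 hp2⟩
  have k1 : μ (Iic t) - ν (Iic t) ≤ π (Dset t) := by
    rw [← hA, ← hB]
    exact le_measure_diff.trans (measure_mono hAB)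
  have k2 : ν (Iic t) - μ (Iic t) ≤ π (Dset t) := by
    rw [← hA, ← hB]
    exact le_measure_diff.trans (measure_mono hBA)
  exact abs_toReal_sub_le (measure_ne_top μ _) (measure_ne_top ν _) k1 k2

lemma monotone_Dset (μ ν : Measure ℝ) [IsProbabilityMeasure μ] [IsProbabilityMeasure ν] (t : ℝ) :
    (unif.map (fun u => (quantile (cdfOf μ) u, quantile (cdfOf ν) u))) (Dset t)
      = ENNReal.ofReal |cdfOf μ t - cdfOf ν t| := by
  have hq : AEMeasurable (fun u => (quantile (cdfOf μ) u, quantile (cdfOf ν) u)) unif :=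
    (aemeasurable_quantile μ).prodMk (aemeasurable_quantile ν)
  rw [Measure.map_apply_of_aemeasurable hq (measurableSet_Dset t), unif,
    Measure.restrict_apply' measurableSet_Ioo]
  have mem_iff : ∀ u ∈ Ioo (0:ℝ) 1,
      ((quantile (cdfOf μ) u, quantile (cdfOf ν) u) ∈ Dset t ↔
        ((u ≤ cdfOf μ t ∧ cdfOf ν t < u) ∨ (u ≤ cdfOf ν t ∧ cdfOf μ t < u))) := by
    intro u hu
    have h1 := quantile_le_iff μ hu.1 hu.2 (t := t)
    have h2 := quantile_le_iff ν hu.1 hu.2 (t := t)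
    simp only [Dset, mem_setOf_eq, ← not_le, h1, h2]
  rcases le_total (cdfOf ν t) (cdfOf μ t) with h | h
  · rw [volume_between (a := cdfOf ν t) (b := cdfOf μ t) _ ?_ ?_,
      abs_of_nonneg (sub_nonneg.2 h)]
    · intro u hu
      have hu1 : u ∈ Ioo (0:ℝ) 1 :=
        ⟨(cdfOf_nonneg ν t).trans_lt hu.1, hu.2.trans_le (cdfOf_le_one μ t)⟩
      exact ⟨(mem_iff u hu1).2 (Or.inl ⟨hu.2.le, hu.1⟩), hu1⟩
    · rintro u ⟨hu, hu2⟩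
      rcases (mem_iff u hu2).1 hu with h' | h'
      · exact ⟨h'.2, h'.1⟩
      · exact absurd ((h'.1.trans h).trans_lt h'.2) (lt_irrefl _)
  · rw [volume_between (a := cdfOf μ t) (b := cdfOf ν t) _ ?_ ?_,
      abs_of_nonpos (sub_nonpos.2 h), neg_sub]
    · intro u hu
      have hu1 : u ∈ Ioo (0:ℝ) 1 :=
        ⟨(cdfOf_nonneg μ t).trans_lt hu.1, hu.2.trans_le (cdfOf_le_one ν t)⟩
      exact ⟨(mem_iff u hu1).2 (Or.inr ⟨hu.2.le, hu.1⟩), hu1⟩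
    · rintro u ⟨hu, hu2⟩
      rcases (mem_iff u hu2).1 hu with h' | h'
      · exact absurd ((h'.1.trans h).trans_lt h'.2) (lt_irrefl _)
      · exact ⟨h'.2, h'.1⟩


theorem monotone_coupling_optimal (μ ν : Measure ℝ)
    [IsProbabilityMeasure μ] [IsProbabilityMeasure ν]
    (hμ : Integrable id μ) (hν : Integrable id ν) :
    (unif.map (fun u => (quantile (cdfOf μ) u, quantile (cdfOf ν) u))).map Prod.fst = μ ∧
    (unif.map (fun u => (quantile (cdfOf μ) u, quantile (cdfOf ν) u))).map Prod.snd = ν ∧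
    ∫⁻ p, ENNReal.ofReal |p.1 - p.2|
        ∂(unif.map (fun u => (quantile (cdfOf μ) u, quantile (cdfOf ν) u))) = W1 μ ν := by
  set q := fun u => (quantile (cdfOf μ) u, quantile (cdfOf ν) u) with hqdef
  have hq : AEMeasurable q unif :=
    (aemeasurable_quantile μ).prodMk (aemeasurable_quantile ν)
  haveI : IsProbabilityMeasure (unif.map q) := Measure.isProbabilityMeasure_map hq
  have hm1 : (unif.map q).map Prod.fst = μ := by
    rw [AEMeasurable.map_map_of_aemeasurable measurable_fst.aemeasurable hq]
    exact map_quantile μ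
  have hm2 : (unif.map q).map Prod.snd = ν := by
    rw [AEMeasurable.map_map_of_aemeasurable measurable_snd.aemeasurable hq]
    exact map_quantile ν
  have hval : ∫⁻ p, ENNReal.ofReal |p.1 - p.2| ∂(unif.map q)
      = ∫⁻ t, ENNReal.ofReal |cdfOf μ t - cdfOf ν t| := by
    rw [cost_eq_lintegral_Dset]
    exact lintegral_congr fun t => monotone_Dset μ ν t
  refine ⟨hm1, hm2, le_antisymm ?_ (iInf₂_le (unif.map q) ⟨hm1, hm2⟩)⟩
  rw [hval]
  refine le_iInf₂ fun π hπ => ?_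
  haveI : IsProbabilityMeasure π := by
    constructor
    have h := hπ.1
    have h2 : π.map Prod.fst univ = 1 := by rw [h]; exact measure_univ
    rwa [Measure.map_apply measurable_fst MeasurableSet.univ, preimage_univ] at h2
  rw [cost_eq_lintegral_Dset π]
  exact lintegral_mono fun t => coupling_lower μ ν π hπ.1 hπ.2 t
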